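/- Let p be a prime number, g ≥ 1, and let a_0, …, a_{g−1} be integers with p not dividing a_0 and |a_{g−1}·p| > 2g. Set q(x) = x^g + a_{g−1}p·x^{g−1} + … + a_1p·x + a_0p. Then: (i) sym(q) is symplectically irreducible; (ii) sym(q) has a complex root that is not a root of unity; and (iii) sym(q) is not a polynomial in x^k for any integer k > 1. -/

import Mathlib

open Polynomial

/-- For a polynomial `q = a_g x^g + … + a_0` of degree `g`,
`sym(q) = ∑ a_i x^{g-i} (x²+1)^i`, i.e. `sym(q)(x) = x^g · q(x + 1/x)`. -/
noncomputable def symPoly (q : Polynomial ℤ) : Polynomial ℤ :=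
  ∑ i ∈ Finset.range (q.natDegree + 1),
    Polynomial.C (q.coeff i) * Polynomial.X ^ (q.natDegree - i) * (Polynomial.X ^ 2 + 1) ^ i

/-- A polynomial is symplectic if it is monic of even degree `2n` (`n ≥ 1`) and palindromic. -/
def IsSymplecticPoly (p : Polynomial ℤ) : Prop :=
  p.Monic ∧ (∃ n : ℕ, 1 ≤ n ∧ p.natDegree = 2 * n) ∧
    ∀ i ≤ p.natDegree, p.coeff i = p.coeff (p.natDegree - i)

/-- A symplectic polynomial is symplectically irreducible if it is not the
product of two symplectic polynomials. -/
def SymplecticallyIrreducible (p : Polynomial ℤ) : Prop :=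
  IsSymplecticPoly p ∧
    ¬ ∃ p₁ p₂ : Polynomial ℤ, IsSymplecticPoly p₁ ∧ IsSymplecticPoly p₂ ∧ p = p₁ * p₂


noncomputable def symAux (m : ℕ) (r : Polynomial ℤ) : Polynomial ℤ :=
  ∑ j ∈ Finset.range (m + 1),
    Polynomial.C (r.coeff j) * Polynomial.X ^ (m - j) * (Polynomial.X ^ 2 + 1) ^ j

lemma monic_Xsq_add_one : (Polynomial.X ^ 2 + 1 : Polynomial ℤ).Monic := by
  simpa using Polynomial.monic_X_pow_add_C (a := (1:ℤ)) (n := 2) two_ne_zero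

lemma natDegree_Xsq_add_one : (Polynomial.X ^ 2 + 1 : Polynomial ℤ).natDegree = 2 := by
  simpa using Polynomial.natDegree_X_pow_add_C (n := 2) (r := (1:ℤ))

lemma monic_Xsq_pow (j : ℕ) : ((Polynomial.X ^ 2 + 1 : Polynomial ℤ) ^ j).Monic :=
  monic_Xsq_add_one.pow j

lemma natDegree_Xsq_pow (j : ℕ) :
    ((Polynomial.X ^ 2 + 1 : Polynomial ℤ) ^ j).natDegree = 2 * j := by
  rw [monic_Xsq_add_one.natDegree_pow, natDegree_Xsq_add_one, Nat.mul_comm]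

lemma natDegree_symTerm_le (c : ℤ) (m j : ℕ) (hj : j ≤ m) :
    (Polynomial.C c * Polynomial.X ^ (m - j) * (Polynomial.X ^ 2 + 1 : Polynomial ℤ) ^ j).natDegree
      ≤ m + j := by
  calc (Polynomial.C c * Polynomial.X ^ (m - j) *
        (Polynomial.X ^ 2 + 1 : Polynomial ℤ) ^ j).natDegree
      ≤ (Polynomial.C c * Polynomial.X ^ (m - j)).natDegree
        + ((Polynomial.X ^ 2 + 1 : Polynomial ℤ) ^ j).natDegree := Polynomial.natDegree_mul_le
    _ ≤ (m - j) + 2 * j := by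
        gcongr
        · calc (Polynomial.C c * Polynomial.X ^ (m - j)).natDegree
              ≤ (Polynomial.C c).natDegree + (Polynomial.X ^ (m-j) : Polynomial ℤ).natDegree :=
                Polynomial.natDegree_mul_le
            _ ≤ m - j := by simp
        · exact le_of_eq (natDegree_Xsq_pow j)
    _ ≤ m + j := by omega

lemma natDegree_symAux_le (m : ℕ) (r : Polynomial ℤ) : (symAux m r).natDegree ≤ 2 * m := by
  refine Polynomial.natDegree_sum_le_of_forall_le _ _ fun j hj => ?_
  have hj' : j ≤ m := by simpa using Nat.lt_succ_iff.mp (Finset.mem_range.mp hj)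
  exact le_trans (natDegree_symTerm_le _ m j hj') (by omega)

lemma coeff_symAux_top (m : ℕ) (r : Polynomial ℤ) : (symAux m r).coeff (2 * m) = r.coeff m := by
  rw [symAux, Polynomial.finset_sum_coeff]
  rw [Finset.sum_eq_single m]
  · rw [Nat.sub_self, pow_zero, mul_one, Polynomial.coeff_C_mul]
    have : ((Polynomial.X ^ 2 + 1 : Polynomial ℤ) ^ m).coeff (2*m) = 1 := by
      have := (monic_Xsq_pow m).leadingCoeff
      rwa [Polynomial.leadingCoeff, natDegree_Xsq_pow m] at this
    rw [this, mul_one]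
  · intro j hj hne
    have hj' : j ≤ m := Nat.lt_succ_iff.mp (Finset.mem_range.mp hj)
    apply Polynomial.coeff_eq_zero_of_natDegree_lt
    exact lt_of_le_of_lt (natDegree_symTerm_le _ m j hj') (by omega)
  · intro h; exact absurd (Finset.self_mem_range_succ m) h

lemma reflect_sum {N : ℕ} {s : Finset ℕ} (f : ℕ → Polynomial ℤ) :
    Polynomial.reflect N (∑ j ∈ s, f j) = ∑ j ∈ s, Polynomial.reflect N (f j) := by
  classical
  induction s using Finset.induction with
  | empty => simp
  | insert _ _ h ih => rw [Finset.sum_insert h, Finset.sum_insert h, Polynomial.reflect_add, ih]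

lemma reflect_Xsq_base :
    Polynomial.reflect 2 (Polynomial.X ^ 2 + 1 : Polynomial ℤ) = Polynomial.X ^ 2 + 1 := by
  rw [show (Polynomial.X ^ 2 + 1 : Polynomial ℤ)
      = Polynomial.C 1 * Polynomial.X ^ 2 + Polynomial.C 1 * Polynomial.X ^ 0 by simp,
    Polynomial.reflect_add, Polynomial.reflect_C_mul_X_pow, Polynomial.reflect_C_mul_X_pow]
  simp [Polynomial.revAt_le]
  ring

lemma reflect_Xsq_pow (j : ℕ) :
    Polynomial.reflect (2 * j) ((Polynomial.X ^ 2 + 1 : Polynomial ℤ) ^ j)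
      = (Polynomial.X ^ 2 + 1) ^ j := by
  induction j with
  | zero => simp
  | succ j ih =>
    rw [show 2 * (j + 1) = 2 * j + 2 by ring, pow_succ,
      Polynomial.reflect_mul _ _ (le_of_eq (natDegree_Xsq_pow j)) (le_of_eq natDegree_Xsq_add_one),
      ih, reflect_Xsq_base]

lemma reflect_symAux (m : ℕ) (r : Polynomial ℤ) :
    Polynomial.reflect (2 * m) (symAux m r) = symAux m r := by
  rw [symAux, reflect_sum]
  refine Finset.sum_congr rfl fun j hj => ?_
  have hj' : j ≤ m := Nat.lt_succ_iff.mp (Finset.mem_range.mp hj)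
  have hsplit : 2 * m = 2 * (m - j) + 2 * j := by omega
  rw [hsplit, Polynomial.reflect_mul _ _ ?_ (le_of_eq (natDegree_Xsq_pow j)),
    reflect_Xsq_pow, Polynomial.reflect_C_mul_X_pow, Polynomial.revAt_le (by omega)]
  · have h2 : 2 * (m - j) - (m - j) = m - j := by omega
    rw [h2]
  · calc (Polynomial.C (r.coeff j) * Polynomial.X ^ (m - j)).natDegree
        ≤ (Polynomial.C (r.coeff j)).natDegree + (Polynomial.X ^ (m-j) : Polynomial ℤ).natDegree :=
          Polynomial.natDegree_mul_le
      _ ≤ 2 * (m - j) := by simp; omega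

lemma symAux_palindromic (m : ℕ) (r : Polynomial ℤ) {i : ℕ} (hi : i ≤ 2 * m) :
    (symAux m r).coeff i = (symAux m r).coeff (2 * m - i) := by
  conv_lhs => rw [← reflect_symAux m r]
  rw [Polynomial.coeff_reflect, Polynomial.revAt_le hi]

lemma Xsq_pow_palindromic (n : ℕ) {i : ℕ} (hi : i ≤ 2 * n) :
    ((Polynomial.X ^ 2 + 1 : Polynomial ℤ) ^ n).coeff i
      = ((Polynomial.X ^ 2 + 1 : Polynomial ℤ) ^ n).coeff (2 * n - i) := by
  conv_lhs => rw [← reflect_Xsq_pow n]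
  rw [Polynomial.coeff_reflect, Polynomial.revAt_le hi]

lemma cpal_decomp : ∀ m : ℕ, ∀ P : Polynomial ℤ,
    (∀ i, 2 * m < i → P.coeff i = 0) → (∀ i ≤ 2 * m, P.coeff i = P.coeff (2 * m - i)) →
    ∃ r : Polynomial ℤ, (∀ j, m < j → r.coeff j = 0) ∧ r.coeff m = P.coeff (2 * m) ∧
      P = symAux m r := by
  intro m
  induction m with
  | zero =>
    intro P h1 h2
    refine ⟨Polynomial.C (P.coeff 0), fun j hj => ?_, by simp, ?_⟩
    · rw [Polynomial.coeff_C, if_neg (by omega)]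
    · have : symAux 0 (Polynomial.C (P.coeff 0)) = Polynomial.C (P.coeff 0) := by
        simp [symAux]
      rw [this]
      ext i
      rcases Nat.eq_zero_or_pos i with hi | hi
      · simp [hi]
      · rw [h1 i (by omega), Polynomial.coeff_C, if_neg (by omega)]
  | succ m ih =>
    intro P h1 h2
    set c := P.coeff (2 * (m + 1)) with hc
    set E : Polynomial ℤ := (Polynomial.X ^ 2 + 1) ^ (m + 1) with hE
    have hEtop : E.coeff (2 * (m + 1)) = 1 := by
      have := (monic_Xsq_pow (m + 1)).leadingCoeff
      rwa [Polynomial.leadingCoeff, natDegree_Xsq_pow (m + 1)] at this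
    have hEzero : E.coeff 0 = 1 := by
      rw [Polynomial.coeff_zero_eq_eval_zero]
      simp [hE]
    have hEhigh : ∀ i, 2 * (m + 1) < i → E.coeff i = 0 := fun i hi =>
      Polynomial.coeff_eq_zero_of_natDegree_lt (by rw [natDegree_Xsq_pow]; omega)
    set P' : Polynomial ℤ := P - Polynomial.C c * E with hP'
    have hP'c : ∀ i, P'.coeff i = P.coeff i - c * E.coeff i := by
      intro i; simp [hP', Polynomial.coeff_C_mul]
    have hP'1 : ∀ i, 2 * (m + 1) < i → P'.coeff i = 0 := by
      intro i hi; rw [hP'c, h1 i hi, hEhigh i hi, mul_zero, sub_zero]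
    have hP'2 : ∀ i ≤ 2 * (m + 1), P'.coeff i = P'.coeff (2 * (m + 1) - i) := by
      intro i hi
      rw [hP'c, hP'c, h2 i hi, Xsq_pow_palindromic (m + 1) hi]
    have hP'top : P'.coeff (2 * (m + 1)) = 0 := by
      rw [hP'c, hEtop, mul_one, ← hc, sub_self]
    have hP'0 : P'.coeff 0 = 0 := by
      rw [hP'c, hEzero, mul_one, h2 0 (by omega), Nat.sub_zero, ← hc, sub_self]
    set Q := P'.divX with hQ
    have hXQ : Polynomial.X * Q = P' := by
      have := Polynomial.X_mul_divX_add P'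
      rwa [hP'0, map_zero, add_zero] at this
    have hQc : ∀ i, Q.coeff i = P'.coeff (i + 1) := fun i => Polynomial.coeff_divX
    have hQ1 : ∀ i, 2 * m < i → Q.coeff i = 0 := by
      intro i hi
      rw [hQc]
      rcases Nat.lt_or_ge (i + 1) (2 * (m + 1)) with h | h
      · exact absurd h (by omega)
      · rcases Nat.eq_or_lt_of_le h with h' | h'
        · rw [← h']; exact hP'top
        · exact hP'1 _ h'
    have hQ2 : ∀ i ≤ 2 * m, Q.coeff i = Q.coeff (2 * m - i) := by
      intro i hi
      rw [hQc, hQc, hP'2 (i + 1) (by omega)]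
      congr 1
      omega
    obtain ⟨r', hr'v, -, hQeq⟩ := ih Q hQ1 hQ2
    refine ⟨Polynomial.C c * Polynomial.X ^ (m + 1) + r', ?_, ?_, ?_⟩
    · intro j hj
      rw [Polynomial.coeff_add, Polynomial.coeff_C_mul, Polynomial.coeff_X_pow,
        if_neg (by omega), mul_zero, zero_add]
      exact hr'v j (by omega)
    · rw [Polynomial.coeff_add, Polynomial.coeff_C_mul, Polynomial.coeff_X_pow, if_pos rfl,
        mul_one, hr'v (m + 1) (by omega), add_zero]
    · have hcoeff_eq : ∀ j ≤ m,
          (Polynomial.C c * Polynomial.X ^ (m + 1) + r').coeff j = r'.coeff j := by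
        intro j hj
        rw [Polynomial.coeff_add, Polynomial.coeff_C_mul, Polynomial.coeff_X_pow,
          if_neg (by omega), mul_zero, zero_add]
      have htopc : (Polynomial.C c * Polynomial.X ^ (m + 1) + r').coeff (m + 1) = c := by
        rw [Polynomial.coeff_add, Polynomial.coeff_C_mul, Polynomial.coeff_X_pow, if_pos rfl,
          mul_one, hr'v (m + 1) (by omega), add_zero]
      rw [symAux, Finset.sum_range_succ, htopc, Nat.sub_self, pow_zero, mul_one]
      have hsum : ∑ j ∈ Finset.range (m + 1),
          Polynomial.C ((Polynomial.C c * Polynomial.X ^ (m + 1) + r').coeff j) *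
            Polynomial.X ^ (m + 1 - j) * (Polynomial.X ^ 2 + 1) ^ j
          = Polynomial.X * symAux m r' := by
        rw [symAux, Finset.mul_sum]
        refine Finset.sum_congr rfl fun j hj => ?_
        have hj' : j ≤ m := Nat.lt_succ_iff.mp (Finset.mem_range.mp hj)
        rw [hcoeff_eq j hj', show m + 1 - j = (m - j) + 1 by omega, pow_succ]
        ring
      rw [hsum, ← hQeq, hXQ, hP']
      ring

lemma symAux_aeval {m : ℕ} {r : Polynomial ℤ} (hr : ∀ j, m < j → r.coeff j = 0)
    (z : ℂ) (hz : z ≠ 0) :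
    Polynomial.aeval z (symAux m r) = z ^ m * Polynomial.aeval (z + z⁻¹) r := by
  have hdeg : r.natDegree < m + 1 :=
    Nat.lt_succ_of_le (Polynomial.natDegree_le_iff_coeff_eq_zero.mpr hr)
  rw [Polynomial.aeval_eq_sum_range' hdeg, symAux, map_sum, Finset.mul_sum]
  refine Finset.sum_congr rfl fun j hj => ?_
  have hj' : j ≤ m := Nat.lt_succ_iff.mp (Finset.mem_range.mp hj)
  rw [map_mul, map_mul, map_pow, Polynomial.aeval_X, Polynomial.aeval_C, zsmul_eq_mul]
  have haux : (Polynomial.aeval z) ((Polynomial.X ^ 2 + 1 : Polynomial ℤ) ^ j)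
      = (z ^ 2 + 1) ^ j := by
    rw [map_pow, map_add, map_pow, Polynomial.aeval_X, map_one]
  rw [haux]
  simp only [eq_intCast]
  have hzz : z + z⁻¹ = (z ^ 2 + 1) * z⁻¹ := by field_simp
  have hm : z ^ m = z ^ (m - j) * z ^ j := by rw [← pow_add]; congr 1; omega
  have hone : z ^ j * z⁻¹ ^ j = 1 := by rw [← mul_pow, mul_inv_cancel₀ hz, one_pow]
  rw [hzz, mul_pow, hm]
  linear_combination (-(r.coeff j : ℂ) * (z ^ 2 + 1) ^ j * z ^ (m - j)) * hone

lemma exists_quad_root (w : ℂ) : ∃ z : ℂ, z ≠ 0 ∧ z + z⁻¹ = w := by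
  obtain ⟨s, hs⟩ := IsAlgClosed.exists_pow_nat_eq (w ^ 2 - 4) (n := 2) (by norm_num)
  set z := (w + s) / 2 with hzdef
  have hquad : z ^ 2 - w * z + 1 = 0 := by
    rw [hzdef]
    field_simp
    linear_combination hs
  have hz0 : z ≠ 0 := by
    intro h
    rw [h] at hquad
    simp at hquad
  refine ⟨z, hz0, ?_⟩
  have : z ^ 2 + 1 = w * z := by linear_combination hquad
  field_simp
  linear_combination this

lemma coeff_comp_X_pow_eq_zero (r : Polynomial ℤ) {k n : ℕ} (h : ¬ k ∣ n) :
    (r.comp (Polynomial.X ^ k)).coeff n = 0 := by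
  rw [Polynomial.comp_eq_sum_left, Polynomial.sum_def, Polynomial.finset_sum_coeff]
  refine Finset.sum_eq_zero fun j hj => ?_
  rw [← pow_mul, Polynomial.coeff_C_mul, Polynomial.coeff_X_pow, if_neg, mul_zero]
  intro he
  exact h ⟨j, he⟩

lemma symPoly_eq (q : Polynomial ℤ) : symPoly q = symAux q.natDegree q := rfl

theorem eisenstein_sym_satisfies_homological_criterion (p : ℕ) (hp : p.Prime)
    (g : ℕ) (hg : 1 ≤ g) (a : ℕ → ℤ) (ha0 : ¬ (p : ℤ) ∣ a 0)
    (hbig : (2 * g : ℤ) < |a (g - 1) * (p : ℤ)|)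
    (q : Polynomial ℤ)
    (hq : q = Polynomial.X ^ g +
      ∑ i ∈ Finset.range g, Polynomial.C (a i * (p : ℤ)) * Polynomial.X ^ i) :
    SymplecticallyIrreducible (symPoly q) ∧
      (∃ ζ : ℂ, Polynomial.aeval ζ (symPoly q) = 0 ∧ ¬ ∃ n : ℕ, 1 ≤ n ∧ ζ ^ n = 1) ∧
      ¬ ∃ k : ℕ, 1 < k ∧ ∃ r : Polynomial ℤ, symPoly q = r.comp (Polynomial.X ^ k) := by
  -- coefficients of q
  have hcoeff : ∀ i, q.coeff i = if i = g then 1 else if i < g then a i * p else 0 := by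
    intro i
    rw [hq, Polynomial.coeff_add, Polynomial.coeff_X_pow, Polynomial.finset_sum_coeff]
    simp only [Polynomial.coeff_C_mul, Polynomial.coeff_X_pow, mul_ite, mul_one, mul_zero]
    rw [Finset.sum_ite_eq]
    split_ifs with h1 h2 h3 h4 h5 <;> simp_all [Finset.mem_range] <;> omega
  have hqdeg : q.natDegree = g := by
    have hle : q.natDegree ≤ g := Polynomial.natDegree_le_iff_coeff_eq_zero.mpr (fun N hN => by
      rw [hcoeff N, if_neg (by omega), if_neg (by omega)])
    have hge : g ≤ q.natDegree := Polynomial.le_natDegree_of_ne_zero (by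
      rw [hcoeff g, if_pos rfl]; exact one_ne_zero)
    omega
  have hqmonic : q.Monic := by
    rw [Polynomial.Monic.def, Polynomial.leadingCoeff, hqdeg, hcoeff g, if_pos rfl]
  have hq_high : ∀ j, g < j → q.coeff j = 0 := fun j hj =>
    Polynomial.coeff_eq_zero_of_natDegree_lt (hqdeg ▸ hj)
  have hS : symPoly q = symAux g q := by rw [symPoly_eq, hqdeg]
  have hStop : (symPoly q).coeff (2 * g) = 1 := by
    rw [hS, coeff_symAux_top, hcoeff g, if_pos rfl]
  have hSdeg : (symPoly q).natDegree = 2 * g := by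
    refine le_antisymm (hS ▸ natDegree_symAux_le g q) (Polynomial.le_natDegree_of_ne_zero ?_)
    rw [hStop]; exact one_ne_zero
  have hSmonic : (symPoly q).Monic := by
    rw [Polynomial.Monic.def, Polynomial.leadingCoeff, hSdeg]; exact hStop
  have hSsympl : IsSymplecticPoly (symPoly q) := by
    refine ⟨hSmonic, ⟨g, hg, hSdeg⟩, fun i hi => ?_⟩
    rw [hSdeg] at hi ⊢
    rw [hS]
    exact symAux_palindromic g q hi
  have hp0 : (p : ℤ) ≠ 0 := by exact_mod_cast hp.ne_zero
  have hpZ : Prime (p : ℤ) := Nat.prime_iff_prime_int.mp hp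
  -- q is irreducible by Eisenstein
  have hqirr : Irreducible q := by
    have hPprime : (Ideal.span {(p : ℤ)}).IsPrime := (Ideal.span_singleton_prime hp0).mpr hpZ
    have heis : q.IsEisensteinAt (Ideal.span {(p : ℤ)}) := by
      refine ⟨?_, ?_, ?_⟩
      · rw [Polynomial.leadingCoeff, hqdeg, hcoeff g, if_pos rfl, Ideal.mem_span_singleton]
        exact fun h => hpZ.not_unit (isUnit_of_dvd_one h)
      · intro n hn
        rw [hqdeg] at hn
        rw [hcoeff n, if_neg (by omega), if_pos hn, Ideal.mem_span_singleton]
        exact dvd_mul_left _ _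
      · rw [hcoeff 0, if_neg (by omega), if_pos (by omega), Ideal.span_singleton_pow,
          Ideal.mem_span_singleton]
        rintro ⟨t, ht⟩
        apply ha0
        refine ⟨t, mul_right_cancel₀ hp0 ?_⟩
        rw [ht]; ring
    exact heis.irreducible hPprime hqmonic.isPrimitive (by omega)
  refine ⟨⟨hSsympl, ?_⟩, ?_, ?_⟩
  · -- symplectic irreducibility
    rintro ⟨p₁, p₂, ⟨h₁m, ⟨n₁, hn₁, hd₁⟩, h₁pal⟩, ⟨h₂m, ⟨n₂, hn₂, hd₂⟩, h₂pal⟩, heq⟩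
    obtain ⟨r₁, hr₁v, hr₁top, hp₁⟩ := cpal_decomp n₁ p₁
      (fun i hi => Polynomial.coeff_eq_zero_of_natDegree_lt (hd₁ ▸ hi))
      (fun i hi => by have := h₁pal i (by rw [hd₁]; exact hi); rwa [hd₁] at this)
    obtain ⟨r₂, hr₂v, hr₂top, hp₂⟩ := cpal_decomp n₂ p₂
      (fun i hi => Polynomial.coeff_eq_zero_of_natDegree_lt (hd₂ ▸ hi))
      (fun i hi => by have := h₂pal i (by rw [hd₂]; exact hi); rwa [hd₂] at this)
    have hr₁1 : r₁.coeff n₁ = 1 := by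
      rw [hr₁top, ← hd₁]; exact h₁m.coeff_natDegree
    have hr₂1 : r₂.coeff n₂ = 1 := by
      rw [hr₂top, ← hd₂]; exact h₂m.coeff_natDegree
    have hr₁deg : r₁.natDegree = n₁ :=
      le_antisymm (Polynomial.natDegree_le_iff_coeff_eq_zero.mpr hr₁v)
        (Polynomial.le_natDegree_of_ne_zero (by rw [hr₁1]; exact one_ne_zero))
    have hr₂deg : r₂.natDegree = n₂ :=
      le_antisymm (Polynomial.natDegree_le_iff_coeff_eq_zero.mpr hr₂v)
        (Polynomial.le_natDegree_of_ne_zero (by rw [hr₂1]; exact one_ne_zero))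
    have hg' : g = n₁ + n₂ := by
      have h := hSdeg
      rw [heq, h₁m.natDegree_mul h₂m, hd₁, hd₂] at h
      omega
    have key : ∀ w : ℂ, Polynomial.aeval w q = Polynomial.aeval w (r₁ * r₂) := by
      intro w
      obtain ⟨z, hz0, hzw⟩ := exists_quad_root w
      have hlhs : Polynomial.aeval z (symPoly q) = z ^ g * Polynomial.aeval w q := by
        rw [hS, symAux_aeval hq_high z hz0, hzw]
      have hrhs : Polynomial.aeval z (symPoly q)
          = z ^ g * (Polynomial.aeval w r₁ * Polynomial.aeval w r₂) := by
        rw [heq, hp₁, hp₂, map_mul, symAux_aeval hr₁v z hz0, symAux_aeval hr₂v z hz0, hzw,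
          hg', pow_add]
        ring
      have h := hlhs.symm.trans hrhs
      rw [map_mul]
      exact mul_left_cancel₀ (pow_ne_zero g hz0) h
    have hqfac : q = r₁ * r₂ := by
      apply Polynomial.map_injective (Int.castRingHom ℂ) Int.cast_injective
      apply Polynomial.funext
      intro w
      have h := key w
      rw [Polynomial.aeval_def, Polynomial.aeval_def, ← Polynomial.eval_map,
        ← Polynomial.eval_map] at h
      simpa [algebraMap_int_eq] using h
    rcases hqirr.isUnit_or_isUnit hqfac with h | h
    · have := Polynomial.natDegree_eq_zero_of_isUnit h
      omega
    · have := Polynomial.natDegree_eq_zero_of_isUnit h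
      omega
  · -- a root that is not a root of unity
    set Q : Polynomial ℂ := q.map (Int.castRingHom ℂ) with hQdef
    have hQmonic : Q.Monic := hqmonic.map _
    have hQdeg : Q.natDegree = g := by rw [hQdef, hqmonic.natDegree_map, hqdeg]
    have hQne : Q ≠ 0 := hQmonic.ne_zero
    have hsplits : Q.Splits := IsAlgClosed.splits Q
    have hcard : Q.roots.card = g := by
      rw [Polynomial.splits_iff_card_roots.mp hsplits]; exact hQdeg
    have hnext : Q.nextCoeff = ((a (g - 1) * (p : ℤ) : ℤ) : ℂ) := by
      rw [Polynomial.nextCoeff_of_natDegree_pos (by omega), hQdeg, hQdef,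
        Polynomial.coeff_map, hcoeff (g - 1), if_neg (by omega), if_pos (by omega)]
      simp
    have hsum : Q.nextCoeff = -Q.roots.sum :=
      hsplits.nextCoeff_eq_neg_sum_roots_of_monic hQmonic
    have hnorm : ‖Q.roots.sum‖ = ((|a (g - 1) * (p : ℤ)| : ℤ) : ℝ) := by
      have : Q.roots.sum = -((a (g - 1) * (p : ℤ) : ℤ) : ℂ) := by
        rw [← hnext, hsum, neg_neg]
      rw [this, norm_neg, Complex.norm_intCast, Int.cast_abs]
    have hβ : ∃ β ∈ Q.roots, 2 < ‖β‖ := by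
      by_contra hcon
      push_neg at hcon
      have h1 : ‖Q.roots.sum‖ ≤ (Q.roots.map norm).sum := norm_multiset_sum_le _
      have h2 : (Q.roots.map norm).sum ≤ (Q.roots.map norm).card • (2 : ℝ) :=
        Multiset.sum_le_card_nsmul _ _ (fun x hx => by
          obtain ⟨β, hβ, rfl⟩ := Multiset.mem_map.mp hx
          exact hcon β hβ)
      rw [Multiset.card_map, hcard, nsmul_eq_mul] at h2
      have h3 : ((2 * g : ℤ) : ℝ) < ((|a (g - 1) * (p : ℤ)| : ℤ) : ℝ) := by exact_mod_cast hbig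
      rw [← hnorm] at h3
      push_cast at h3
      linarith
    obtain ⟨β, hβmem, hβnorm⟩ := hβ
    have hβroot : Q.eval β = 0 := (Polynomial.mem_roots hQne).mp hβmem
    have haβ : Polynomial.aeval β q = 0 := by
      rw [Polynomial.aeval_def, ← Polynomial.eval_map]
      simpa [algebraMap_int_eq] using hβroot
    obtain ⟨z, hz0, hzβ⟩ := exists_quad_root β
    refine ⟨z, ?_, ?_⟩
    · rw [hS, symAux_aeval hq_high z hz0, hzβ, haβ, mul_zero]
    · rintro ⟨n, hn1, hzn⟩
      have hznorm : ‖z‖ = 1 := by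
        have h := congrArg norm hzn
        rw [norm_pow, norm_one] at h
        by_contra hne
        rcases lt_or_gt_of_ne hne with hlt | hgt
        · have := pow_lt_one₀ (norm_nonneg z) hlt (n := n) (by omega)
          linarith
        · have := one_lt_pow₀ hgt (n := n) (by omega)
          linarith
      have hle : ‖β‖ ≤ 2 := by
        rw [← hzβ]
        calc ‖z + z⁻¹‖ ≤ ‖z‖ + ‖z⁻¹‖ := norm_add_le _ _
          _ = 2 := by rw [norm_inv, hznorm]; norm_num
      linarith
  · -- not a polynomial in x^k
    rintro ⟨k, hk, r, hcomp⟩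
    have hne2 : a (g - 1) * (p : ℤ) ≠ 0 := by
      intro h
      rw [h] at hbig
      simp at hbig
      omega
    have hc2 : (symPoly q).coeff (2 * g - 1) = a (g - 1) * (p : ℤ) := by
      rw [hS, symAux, Polynomial.finset_sum_coeff]
      rw [Finset.sum_eq_single (g - 1)]
      · have hgg : g - (g - 1) = 1 := by omega
        rw [hgg, pow_one, mul_assoc, Polynomial.coeff_C_mul]
        have h1 : (Polynomial.X * (Polynomial.X ^ 2 + 1 : Polynomial ℤ) ^ (g - 1)).coeff
            (2 * g - 1) = ((Polynomial.X ^ 2 + 1 : Polynomial ℤ) ^ (g - 1)).coeff (2 * g - 2) := by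
          rw [show 2 * g - 1 = (2 * g - 2) + 1 by omega, Polynomial.coeff_X_mul]
        have h2 : ((Polynomial.X ^ 2 + 1 : Polynomial ℤ) ^ (g - 1)).coeff (2 * g - 2) = 1 := by
          have h := (monic_Xsq_pow (g - 1)).coeff_natDegree
          rwa [natDegree_Xsq_pow, show 2 * (g - 1) = 2 * g - 2 by omega] at h
        rw [h1, h2, mul_one, hcoeff (g - 1), if_neg (by omega), if_pos (by omega)]
      · intro j hj hne
        rcases eq_or_ne j g with hjeq | hjg
        · rw [hjeq, Nat.sub_self, pow_zero, mul_one, Polynomial.coeff_C_mul]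
          have hodd : ((Polynomial.X ^ 2 + 1 : Polynomial ℤ) ^ g).coeff (2 * g - 1) = 0 := by
            have hXc : ((Polynomial.X + 1 : Polynomial ℤ) ^ g).comp (Polynomial.X ^ 2)
                = (Polynomial.X ^ 2 + 1) ^ g := by
              rw [Polynomial.pow_comp, Polynomial.add_comp, Polynomial.X_comp,
                Polynomial.one_comp]
            rw [← hXc]
            exact coeff_comp_X_pow_eq_zero _ (by omega)
          rw [hodd, mul_zero]
        · have hjlt : j < g - 1 := by
            have := Finset.mem_range.mp hj
            omega
          exact Polynomial.coeff_eq_zero_of_natDegree_lt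
            (lt_of_le_of_lt (natDegree_symTerm_le _ g j (by omega)) (by omega))
      · intro h
        exact absurd (Finset.mem_range.mpr (by omega)) h
    have hdvd1 : k ∣ 2 * g := by
      by_contra h
      have h0 := coeff_comp_X_pow_eq_zero r (k := k) (n := 2 * g) h
      rw [← hcomp, hStop] at h0
      exact one_ne_zero h0
    have hdvd2 : k ∣ 2 * g - 1 := by
      by_contra h
      have h0 := coeff_comp_X_pow_eq_zero r (k := k) (n := 2 * g - 1) h
      rw [← hcomp, hc2] at h0
      exact hne2 h0
    have hone : k ∣ 1 := by
      have := Nat.dvd_sub hdvd1 hdvd2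
      rwa [show 2 * g - (2 * g - 1) = 1 by omega] at this
    have := Nat.le_of_dvd one_pos hone
    omega
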